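/- arXiv:2210.09568 — 4 statements merged into one kernel-verified Lean document; each statement's English description precedes it below -/
import Mathlib

section
/- Let m and n be integers with m ≥ 1 and n ≥ m + 2, and let ρ, μ, ε be real numbers. Let I ⊆ ℝ be a nonempty open interval and let φ : ℝ → ℝ be twice continuously differentiable on I, positive on I, and nonconstant on I. If for all t ∈ I one has (n − m)·φ''(t) = (μ − ρ)·φ(t) and (φ'(t))² = ε − ((m·μ + (n − 2m)·ρ)/((n − m)·(n − m − 1)))·φ(t)², then (n − 1)·μ = (m − 1)·ρ. -/
/-- Equation (rel) in the proof of Proposition 2: for a warping function `φ`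
satisfying the Einstein warped-product ODEs (f1) and (f2) on a nonempty open
interval `I`, positive and nonconstant on `I`, the Einstein constants satisfy
`(n − 1)·μ = (m − 1)·ρ`. -/
theorem einstein_constants_relation
    (m n : ℤ) (hm : 1 ≤ m) (hn : m + 2 ≤ n) (ρ μ ε : ℝ)
    (I : Set ℝ) (hIopen : IsOpen I) (hIconn : I.OrdConnected) (hIne : I.Nonempty)
    (φ : ℝ → ℝ) (hφ : ContDiffOn ℝ 2 φ I)
    (hpos : ∀ t ∈ I, 0 < φ t)
    (hnc : ∃ t₁ ∈ I, ∃ t₂ ∈ I, φ t₁ ≠ φ t₂)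
    (hf1 : ∀ t ∈ I, ((n : ℝ) - m) * deriv (deriv φ) t = (μ - ρ) * φ t)
    (hf2 : ∀ t ∈ I, (deriv φ t) ^ 2 =
      ε - ((m * μ + ((n : ℝ) - 2 * m) * ρ) / (((n : ℝ) - m) * ((n : ℝ) - m - 1)))
        * (φ t) ^ 2) :
    ((n : ℝ) - 1) * μ = ((m : ℝ) - 1) * ρ := by
  set C : ℝ := (m * μ + ((n : ℝ) - 2 * m) * ρ) / (((n : ℝ) - m) * ((n : ℝ) - m - 1)) with hC
  -- differentiability facts
  have hφ1 : DifferentiableOn ℝ φ I := hφ.differentiableOn (by norm_num)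
  have hdφ : ContDiffOn ℝ 1 (deriv φ) I := hφ.deriv_of_isOpen hIopen (by norm_num)
  have hdφ1 : DifferentiableOn ℝ (deriv φ) I := hdφ.differentiableOn (by norm_num)
  -- a point where deriv φ ≠ 0
  obtain ⟨t₀, ht₀, hd0⟩ : ∃ t₀ ∈ I, deriv φ t₀ ≠ 0 := by
    by_contra h
    push_neg at h
    obtain ⟨t₁, ht₁, t₂, ht₂, hne⟩ := hnc
    have hconv : Convex ℝ I := convex_iff_ordConnected.mpr hIconn
    refine hne (hconv.is_const_of_fderivWithin_eq_zero hφ1 (fun x hx => ?_) ht₁ ht₂)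
    have hux : UniqueDiffWithinAt ℝ I x := hIopen.uniqueDiffWithinAt hx
    have : fderivWithin ℝ φ I x = fderiv ℝ φ x := fderivWithin_of_isOpen hIopen hx
    rw [this]
    ext y
    simp [← toSpanSingleton_deriv, h x hx]
  -- deriv φ has derivative deriv (deriv φ) t₀ at t₀
  have hIn : I ∈ nhds t₀ := hIopen.mem_nhds ht₀
  have hd2 : HasDerivAt (deriv φ) (deriv (deriv φ) t₀) t₀ :=
    ((hdφ1.differentiableAt hIn)).hasDerivAt
  have hd1 : HasDerivAt φ (deriv φ t₀) t₀ := (hφ1.differentiableAt hIn).hasDerivAt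
  -- the function g t = (deriv φ t)^2 + C * (φ t)^2 is constant ε near t₀
  have hg : HasDerivAt (fun t => (deriv φ t) ^ 2 + C * (φ t) ^ 2)
      (2 * deriv φ t₀ * deriv (deriv φ) t₀ + C * (2 * φ t₀ * deriv φ t₀)) t₀ := by
    have h1 : HasDerivAt (fun t => (deriv φ t) ^ 2) (2 * deriv φ t₀ * deriv (deriv φ) t₀) t₀ := by
      have := hd2.fun_pow 2
      simpa [mul_comm, mul_assoc, mul_left_comm] using this
    have h2 : HasDerivAt (fun t => C * (φ t) ^ 2) (C * (2 * φ t₀ * deriv φ t₀)) t₀ := by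
      have := (hd1.pow 2).const_mul C
      simpa [mul_comm, mul_assoc, mul_left_comm] using this
    exact h1.add h2
  have hgconst : (fun t => (deriv φ t) ^ 2 + C * (φ t) ^ 2) =ᶠ[nhds t₀] fun _ => ε := by
    filter_upwards [hIn] with t ht
    linarith [hf2 t ht]
  have hzero : HasDerivAt (fun t => (deriv φ t) ^ 2 + C * (φ t) ^ 2) 0 t₀ :=
    hgconst.hasDerivAt_iff.mpr (hasDerivAt_const t₀ ε)
  have huniq : 2 * deriv φ t₀ * deriv (deriv φ) t₀ + C * (2 * φ t₀ * deriv φ t₀) = 0 :=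
    hg.unique hzero
  -- now algebra
  have hφpos := hpos t₀ ht₀
  have hkey : deriv (deriv φ) t₀ + C * φ t₀ = 0 := by
    have h2 : deriv φ t₀ * (deriv (deriv φ) t₀ + C * φ t₀) = 0 := by linear_combination huniq / 2
    rcases mul_eq_zero.mp h2 with h | h
    · exact absurd h hd0
    · exact h
  have hf1' := hf1 t₀ ht₀
  -- (μ - ρ) φ = (n-m) * deriv² = -(n-m) C φ
  have hnm : (2:ℝ) ≤ (n:ℝ) - m := by
    have : (m:ℝ) + 2 ≤ (n:ℝ) := by exact_mod_cast hn
    linarith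
  have hne1 : ((n:ℝ) - m) ≠ 0 := by linarith
  have hne2 : ((n:ℝ) - m - 1) ≠ 0 := by linarith
  have hmain : (μ - ρ) * φ t₀ = -(((n:ℝ) - m) * C) * φ t₀ := by
    rw [← hf1']
    have : deriv (deriv φ) t₀ = -(C * φ t₀) := by linarith [hkey]
    rw [this]; ring
  have hμρ : μ - ρ = -(((n:ℝ) - m) * C) :=
    mul_right_cancel₀ (ne_of_gt hφpos) hmain
  rw [hC] at hμρ
  field_simp at hμρ
  nlinarith [hμρ, sq_nonneg ((n:ℝ) - m)]
end

section
/- Let m and n be integers with m ≥ 1 and n ≥ m + 2, and let ρ, μ, ε be real numbers. Let I ⊆ ℝ be a nonempty open interval and let φ : ℝ → ℝ be twice continuously differentiable on I, positive on I, and nonconstant on I. If for all t ∈ I one has (n − m)·φ''(t) = (μ − ρ)·φ(t) and (φ'(t))² = ε − ((m·μ + (n − 2m)·ρ)/((n − m)·(n − m − 1)))·φ(t)², then for all t ∈ I one has (n − 1)·φ''(t) + ρ·φ(t) = 0 and (φ'(t))² = ε − (ρ/(n − 1))·φ(t)². -/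
private lemma aux_nonzero_deriv {φ : ℝ → ℝ} {I : Set ℝ}
    (hIconn : I.OrdConnected) (hdiff : DifferentiableOn ℝ φ I)
    {a b : ℝ} (ha : a ∈ I) (hb : b ∈ I) (hab : a < b) (hne : φ a ≠ φ b) :
    ∃ c ∈ I, deriv φ c ≠ 0 := by
  have hsub : Set.Icc a b ⊆ I := hIconn.out ha hb
  obtain ⟨c, hc, hc'⟩ := exists_deriv_eq_slope φ hab
    (hdiff.continuousOn.mono hsub)
    (hdiff.mono (Set.Ioo_subset_Icc_self.trans hsub))
  refine ⟨c, hsub (Set.Ioo_subset_Icc_self hc), ?_⟩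
  rw [hc']
  exact div_ne_zero (sub_ne_zero.mpr (Ne.symm hne)) (sub_ne_zero.mpr hab.ne')

/-- Reduction step in the proof of Proposition 2: the warping-function
equations (f1) and (f2) imply the reduced forms
(f1r): `(n − 1)·φ'' + ρ·φ = 0` and (f2r): `(φ')² = ε − (ρ/(n − 1))·φ²` on `I`. -/
theorem einstein_warping_reduced_equations
    (m n : ℤ) (hm : 1 ≤ m) (hn : m + 2 ≤ n) (ρ μ ε : ℝ)
    (I : Set ℝ) (hIopen : IsOpen I) (hIconn : I.OrdConnected) (hIne : I.Nonempty)
    (φ : ℝ → ℝ) (hφ : ContDiffOn ℝ 2 φ I)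
    (hpos : ∀ t ∈ I, 0 < φ t)
    (hnc : ∃ t₁ ∈ I, ∃ t₂ ∈ I, φ t₁ ≠ φ t₂)
    (hf1 : ∀ t ∈ I, ((n : ℝ) - m) * deriv (deriv φ) t = (μ - ρ) * φ t)
    (hf2 : ∀ t ∈ I, (deriv φ t) ^ 2 =
      ε - ((m * μ + ((n : ℝ) - 2 * m) * ρ) / (((n : ℝ) - m) * ((n : ℝ) - m - 1)))
        * (φ t) ^ 2) :
    ∀ t ∈ I, ((n : ℝ) - 1) * deriv (deriv φ) t + ρ * φ t = 0 ∧
      (deriv φ t) ^ 2 = ε - (ρ / ((n : ℝ) - 1)) * (φ t) ^ 2 := by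
  -- numeric facts
  have hmr : (1 : ℝ) ≤ (m : ℝ) := by exact_mod_cast hm
  have hnr : (m : ℝ) + 2 ≤ (n : ℝ) := by exact_mod_cast hn
  have hnm : ((n : ℝ) - m) ≠ 0 := by linarith
  have hnm1 : ((n : ℝ) - m - 1) ≠ 0 := by linarith
  have hn1 : ((n : ℝ) - 1) ≠ 0 := by linarith
  set K : ℝ := (m * μ + ((n : ℝ) - 2 * m) * ρ) / (((n : ℝ) - m) * ((n : ℝ) - m - 1)) with hK
  -- differentiability
  have hdiff : DifferentiableOn ℝ φ I := hφ.differentiableOn (by norm_num)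
  have hdiff' : DifferentiableOn ℝ (deriv φ) I :=
    (hφ.deriv_of_isOpen (m := 1) hIopen (by norm_num)).differentiableOn (by norm_num)
  -- find a point with nonzero derivative
  obtain ⟨t₁, ht₁, t₂, ht₂, hne⟩ := hnc
  have hexc : ∃ c ∈ I, deriv φ c ≠ 0 := by
    rcases lt_trichotomy t₁ t₂ with h | h | h
    · exact aux_nonzero_deriv hIconn hdiff ht₁ ht₂ h hne
    · exact absurd (by rw [h]) hne
    · exact aux_nonzero_deriv hIconn hdiff ht₂ ht₁ h (Ne.symm hne)
  obtain ⟨c, hcI, hc0⟩ := hexc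
  -- differentiate (f2) at c
  have hdφc : HasDerivAt φ (deriv φ c) c :=
    (hdiff.differentiableAt (hIopen.mem_nhds hcI)).hasDerivAt
  have hdφ'c : HasDerivAt (deriv φ) (deriv (deriv φ) c) c :=
    (hdiff'.differentiableAt (hIopen.mem_nhds hcI)).hasDerivAt
  have hL : HasDerivAt (fun t => (deriv φ t) ^ 2)
      (2 * (deriv φ c) ^ 1 * deriv (deriv φ) c) c := by
    simpa using hdφ'c.fun_pow 2
  have hR : HasDerivAt (fun t => ε - K * (φ t) ^ 2)
      (-(K * (2 * (φ c) ^ 1 * deriv φ c))) c := by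
    exact ((hdφc.pow 2).const_mul K).const_sub ε
  have heq : (fun t => (deriv φ t) ^ 2) =ᶠ[nhds c] (fun t => ε - K * (φ t) ^ 2) := by
    filter_upwards [hIopen.mem_nhds hcI] with t ht using hf2 t ht
  have hder : 2 * (deriv φ c) ^ 1 * deriv (deriv φ) c
      = -(K * (2 * (φ c) ^ 1 * deriv φ c)) := by
    have h1 := hL.deriv
    have h2 := hR.deriv
    rw [← h1, ← h2]
    exact Filter.EventuallyEq.deriv_eq heq
  -- φ'' c = -K φ c
  have hφ''c : deriv (deriv φ) c = -K * φ c := by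
    have h2 : deriv (deriv φ) c * (2 * deriv φ c) = (-K * φ c) * (2 * deriv φ c) := by
      linear_combination hder
    exact mul_right_cancel₀ (mul_ne_zero two_ne_zero hc0) h2
  -- combine with f1 at c, cancel φ c > 0
  have hrel : ((n : ℝ) - m) * (-K) = μ - ρ := by
    have h := hf1 c hcI
    rw [hφ''c] at h
    have hφc := (hpos c hcI).ne'
    have h3 : (((n : ℝ) - m) * (-K)) * φ c = (μ - ρ) * φ c := by linear_combination h
    exact mul_right_cancel₀ hφc h3
  -- key algebraic relation
  have hKmul : K * (((n : ℝ) - m) * ((n : ℝ) - m - 1)) = m * μ + ((n : ℝ) - 2 * m) * ρ := by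
    rw [hK]
    exact div_mul_cancel₀ _ (mul_ne_zero hnm hnm1)
  have key : ((n : ℝ) - 1) * μ = ((m : ℝ) - 1) * ρ := by
    linear_combination (-(((n : ℝ) - m - 1))) * hrel - hKmul
  have hKval : K = ρ / ((n : ℝ) - 1) := by
    rw [hK, div_eq_div_iff (mul_ne_zero hnm hnm1) hn1]
    linear_combination ((m : ℝ)) * key
  intro t ht
  constructor
  · have h1 := hf1 t ht
    have h2 : ((n : ℝ) - m) * (((n : ℝ) - 1) * deriv (deriv φ) t + ρ * φ t) = 0 := by
      linear_combination ((n : ℝ) - 1) * h1 + φ t * key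
    exact (mul_eq_zero.mp h2).resolve_left hnm
  · rw [hf2 t ht, hKval]
end

section
/- Let n ≥ 2 be an integer, ρ > 0 a real number, ε ∈ {−1, 0, 1}, and I ⊆ ℝ a nonempty open interval. Let φ : ℝ → ℝ be twice continuously differentiable on I and positive on I, such that (n − 1)·φ''(t) + ρ·φ(t) = 0 and (φ'(t))² = ε − (ρ/(n − 1))·φ(t)² for all t ∈ I. Then ε = 1 and there exist real numbers a, b with a² + b² = (n − 1)/ρ such that φ(t) = a·cos(t·√(ρ/(n − 1))) + b·sin(t·√(ρ/(n − 1))) for all t ∈ I. -/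
set_option maxHeartbeats 1000000


/-- Case (ii) of Proposition 2 (the case `ρ > 0`): a positive solution of the
reduced warping-function equations forces `ε = 1` and is an explicit
trigonometric function with `a² + b² = (n − 1)/ρ`. -/
theorem positive_ricci_warping_function
    (n : ℤ) (hn : 2 ≤ n) (ρ : ℝ) (hρ : 0 < ρ)
    (ε : ℝ) (hε : ε ∈ ({-1, 0, 1} : Set ℝ))
    (I : Set ℝ) (hIopen : IsOpen I) (hIconn : I.OrdConnected) (hIne : I.Nonempty)
    (φ : ℝ → ℝ) (hφ : ContDiffOn ℝ 2 φ I)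
    (hpos : ∀ t ∈ I, 0 < φ t)
    (hf1r : ∀ t ∈ I, ((n : ℝ) - 1) * deriv (deriv φ) t + ρ * φ t = 0)
    (hf2r : ∀ t ∈ I, (deriv φ t) ^ 2 = ε - (ρ / ((n : ℝ) - 1)) * (φ t) ^ 2) :
    ε = 1 ∧ ∃ a b : ℝ, a ^ 2 + b ^ 2 = ((n : ℝ) - 1) / ρ ∧
      ∀ t ∈ I, φ t = a * Real.cos (t * Real.sqrt (ρ / ((n : ℝ) - 1)))
        + b * Real.sin (t * Real.sqrt (ρ / ((n : ℝ) - 1))) := by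
  obtain ⟨t0, ht0⟩ := hIne
  have hn1 : (1:ℝ) ≤ (n:ℝ) - 1 := by
    have : (2:ℝ) ≤ (n:ℝ) := by exact_mod_cast hn
    linarith
  have hn1' : (0:ℝ) < (n:ℝ) - 1 := by linarith
  set k : ℝ := ρ / ((n:ℝ) - 1) with hkdef
  have hk : 0 < k := div_pos hρ hn1'
  set ω : ℝ := Real.sqrt k with hωdef
  have hω2 : ω ^ 2 = k := Real.sq_sqrt hk.le
  have hω : 0 < ω := Real.sqrt_pos.2 hk
  -- ε = 1
  have hε1 : ε = 1 := by
    have h2 := hf2r t0 ht0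
    have hφpos := hpos t0 ht0
    have hεpos : 0 < ε := by
      nlinarith [sq_nonneg (deriv φ t0), mul_pos hk (pow_pos hφpos 2)]
    simp only [Set.mem_insert_iff, Set.mem_singleton_iff] at hε
    rcases hε with h | h | h
    · rw [h] at hεpos; linarith
    · rw [h] at hεpos; linarith
    · exact h
  -- differentiability data
  have hI' : ∀ t ∈ I, HasDerivAt φ (deriv φ t) t := fun t ht =>
    ((hφ.differentiableOn (by norm_num)).differentiableAt
      (hIopen.mem_nhds ht)).hasDerivAt
  have hφ1 : ContDiffOn ℝ 1 (deriv φ) I :=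
    hφ.deriv_of_isOpen hIopen (by norm_num)
  have hI'' : ∀ t ∈ I, HasDerivAt (deriv φ) (deriv (deriv φ) t) t := fun t ht =>
    ((hφ1.differentiableOn (by norm_num)).differentiableAt
      (hIopen.mem_nhds ht)).hasDerivAt
  have hdd : ∀ t ∈ I, deriv (deriv φ) t = -k * φ t := by
    intro t ht
    have h1 := hf1r t ht
    have hk1 : k * ((n:ℝ) - 1) = ρ := div_mul_cancel₀ ρ hn1'.ne'
    exact mul_left_cancel₀ hn1'.ne' (by linear_combination h1 + φ t * hk1)
  -- initial data
  set A : ℝ := φ t0 with hA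
  set B : ℝ := deriv φ t0 / ω with hB
  set a : ℝ := A * Real.cos (t0 * ω) - B * Real.sin (t0 * ω) with ha
  set b : ℝ := A * Real.sin (t0 * ω) + B * Real.cos (t0 * ω) with hb
  have hAB : A ^ 2 + B ^ 2 = ((n:ℝ) - 1) / ρ := by
    have h2 := hf2r t0 ht0
    rw [hε1] at h2
    have hB2 : B ^ 2 * k = (deriv φ t0) ^ 2 := by
      rw [hB, div_pow, hω2, div_mul_cancel₀ _ hk.ne']
    have hk' : k * (((n:ℝ) - 1) / ρ) = 1 := by
      rw [hkdef]; field_simp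
    nlinarith [hk]
  have hab : a ^ 2 + b ^ 2 = ((n:ℝ) - 1) / ρ := by
    have := Real.sin_sq_add_cos_sq (t0 * ω)
    nlinarith [hAB]
  set g : ℝ → ℝ := fun t => a * Real.cos (t * ω) + b * Real.sin (t * ω) with hg
  set gd : ℝ → ℝ := fun t => ω * (b * Real.cos (t * ω) - a * Real.sin (t * ω)) with hgd
  have hgdiff : ∀ t : ℝ, HasDerivAt g (gd t) t := by
    intro t
    have ht' : HasDerivAt (fun t : ℝ => t * ω) ω t := by
      simpa using (hasDerivAt_id t).mul_const ω
    have hc : HasDerivAt (fun t : ℝ => Real.cos (t * ω)) (-Real.sin (t * ω) * ω) t :=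
      ht'.cos
    have hs : HasDerivAt (fun t : ℝ => Real.sin (t * ω)) (Real.cos (t * ω) * ω) t :=
      ht'.sin
    have := ((hc.const_mul a).add (hs.const_mul b))
    refine HasDerivAt.congr_deriv this ?_
    simp [hgd]; ring
  have hgddiff : ∀ t : ℝ, HasDerivAt gd (-k * g t) t := by
    intro t
    have ht' : HasDerivAt (fun t : ℝ => t * ω) ω t := by
      simpa using (hasDerivAt_id t).mul_const ω
    have hc : HasDerivAt (fun t : ℝ => Real.cos (t * ω)) (-Real.sin (t * ω) * ω) t :=
      ht'.cos
    have hs : HasDerivAt (fun t : ℝ => Real.sin (t * ω)) (Real.cos (t * ω) * ω) t :=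
      ht'.sin
    have := ((hc.const_mul b).sub (hs.const_mul a)).const_mul ω
    refine HasDerivAt.congr_deriv this ?_
    rw [hg, ← hω2]; simp; ring
  -- energy function
  set E : ℝ → ℝ := fun t => (deriv φ t - gd t) ^ 2 + k * (φ t - g t) ^ 2 with hE
  have hEderiv : ∀ t ∈ I, HasDerivAt E 0 t := by
    intro t ht
    have h1 : HasDerivAt (fun t => (deriv φ t - gd t) ^ 2)
        (2 * (deriv φ t - gd t) ^ 1 * (deriv (deriv φ) t - (-k * g t))) t :=
      ((hI'' t ht).sub (hgddiff t)).pow 2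
    have h2 : HasDerivAt (fun t => k * (φ t - g t) ^ 2)
        (k * (2 * (φ t - g t) ^ 1 * (deriv φ t - gd t))) t :=
      (((hI' t ht).sub (hgdiff t)).pow 2).const_mul k
    have := h1.add h2
    refine HasDerivAt.congr_deriv this ?_
    rw [hdd t ht]; ring
  -- E is constant on I
  have hIconv : Convex ℝ I := hIconn.convex
  have hEconst : ∀ t ∈ I, E t = E t0 := by
    intro t ht
    refine hIconv.is_const_of_fderivWithin_eq_zero
      (fun x hx => ((hEderiv x hx).differentiableAt).differentiableWithinAt)
      (fun x hx => ?_) ht ht0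
    rw [fderivWithin_of_isOpen hIopen hx, (hEderiv x hx).hasFDerivAt.fderiv]
    exact ContinuousLinearMap.ext fun y => by simp
  -- E t0 = 0
  have hc0 := Real.sin_sq_add_cos_sq (t0 * ω)
  have hgt0 : g t0 = A := by
    show a * Real.cos (t0 * ω) + b * Real.sin (t0 * ω) = A
    rw [ha, hb]; linear_combination A * hc0
  have hgdt0 : gd t0 = deriv φ t0 := by
    show ω * (b * Real.cos (t0 * ω) - a * Real.sin (t0 * ω)) = deriv φ t0
    rw [ha, hb, hB]
    field_simp
    rw [mul_comm ω t0]
    linear_combination (deriv φ t0) * hc0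
  have hEt0 : E t0 = 0 := by
    rw [hE]; simp only []
    rw [hgt0, hgdt0, ← hA]
    ring
  refine ⟨hε1, a, b, hab, fun t ht => ?_⟩
  have hEt : E t = 0 := by rw [hEconst t ht, hEt0]
  have h1 : (deriv φ t - gd t) ^ 2 + k * (φ t - g t) ^ 2 = 0 := hEt
  have hx : k * (φ t - g t) ^ 2 = 0 := by
    nlinarith [sq_nonneg (deriv φ t - gd t), mul_nonneg hk.le (sq_nonneg (φ t - g t))]
  have h2 : φ t - g t = 0 := by
    rcases mul_eq_zero.1 hx with h | h
    · exact absurd h hk.ne'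
    · exact pow_eq_zero_iff two_ne_zero |>.mp h
  have : φ t = g t := by linarith
  rw [this, hg]
end

section
/- Let a > 0 and let u : ℝ → ℝ be differentiable with 0 < u(s) ≤ a for all s ∈ ℝ, and suppose that (u'(s))² = 1 − (u(s))²/a² for every s ∈ ℝ with u(s) < a. Then u(s) = a for all s ∈ ℝ. -/
private lemma global_ode_aux
    (a : ℝ) (ha : 0 < a) (u : ℝ → ℝ) (hu : Differentiable ℝ u)
    (hpos : ∀ s : ℝ, 0 < u s) (hle : ∀ s : ℝ, u s ≤ a)
    (heq : ∀ s : ℝ, u s < a → (deriv u s) ^ 2 = 1 - (u s) ^ 2 / a ^ 2)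
    (s₀ : ℝ) (h1 : u s₀ < a) (h2 : deriv u s₀ < 0) : False := by
  have hsqpos : ∀ t : ℝ, u t < a → 0 < (deriv u t) ^ 2 := by
    intro t ht
    rw [heq t ht]
    have h0 := hpos t
    have : u t ^ 2 < a ^ 2 := by nlinarith
    have ha2 : (0:ℝ) < a ^ 2 := by positivity
    rw [sub_pos, div_lt_one ha2]
    exact this
  have hne : ∀ t : ℝ, u t < a → deriv u t ≠ 0 := by
    intro t ht h0
    have := hsqpos t ht
    rw [h0] at this; simp at this
  -- derivative stays negative on intervals where u < a
  have key : ∀ s₁, s₀ ≤ s₁ → (∀ t ∈ Set.Icc s₀ s₁, u t < a) →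
      ∀ t ∈ Set.Icc s₀ s₁, deriv u t < 0 := by
    intro s₁ hs₁ hlt
    have := hasDerivWithinAt_forall_lt_or_forall_gt_of_forall_ne (f := u)
      (f' := deriv u) (convex_Icc s₀ s₁)
      (fun x _ => (hu x).hasDerivAt.hasDerivWithinAt) (m := 0)
      (fun x hx => hne x (hlt x hx))
    rcases this with h | h
    · exact h
    · exact absurd (h s₀ (Set.left_mem_Icc.2 hs₁)) (not_lt.2 h2.le)
  -- u stays below a to the right of s₀
  have stay : ∀ s, s₀ ≤ s → u s < a := by
    by_contra hcon
    push_neg at hcon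
    obtain ⟨s₁, hs₁, hges⟩ := hcon
    have hus₁ : u s₁ = a := le_antisymm (hle s₁) hges
    set c : ℝ := (u s₀ + a) / 2 with hc
    have hs₀c : u s₀ < c := by rw [hc]; linarith
    have hca : c < a := by rw [hc]; linarith
    have hs₀s₁ : s₀ < s₁ := by
      rcases lt_or_eq_of_le hs₁ with h | h
      · exact h
      · rw [← h] at hus₁; linarith
    -- first hitting time of level c
    set S : Set ℝ := {t | t ∈ Set.Icc s₀ s₁ ∧ c ≤ u t} with hS
    have hScl : IsClosed S := by
      apply IsClosed.inter isClosed_Icc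
      exact isClosed_le continuous_const hu.continuous
    have hSne : S.Nonempty := ⟨s₁, Set.right_mem_Icc.2 hs₁, by rw [hus₁]; exact hca.le⟩
    have hSbd : BddBelow S := ⟨s₀, fun t ht => ht.1.1⟩
    set T := sInf S with hT
    have hTS : T ∈ S := hScl.csInf_mem hSne hSbd
    have hTlb : ∀ t ∈ S, T ≤ t := fun t ht => csInf_le hSbd ht
    have hbefore : ∀ t, s₀ ≤ t → t < T → u t < c := by
      intro t ht htT
      by_contra hge
      push_neg at hge
      have : t ∈ S := ⟨⟨ht, le_trans htT.le hTS.1.2⟩, hge⟩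
      exact absurd (hTlb t this) (not_le.2 htT)
    have hs₀T : s₀ < T := by
      rcases lt_or_eq_of_le hTS.1.1 with h | h
      · exact h
      · rw [← h] at hTS; exact absurd hTS.2 (not_le.2 hs₀c)
    -- u T = c (by IVT / minimality)
    have huT : u T = c := by
      by_contra hne'
      have hgt : c < u T := lt_of_le_of_ne hTS.2 (Ne.symm hne')
      have := intermediate_value_Icc hs₀T.le hu.continuous.continuousOn
        (Set.mem_Icc.2 ⟨hs₀c.le, hgt.le⟩)
      obtain ⟨t, ht, hut⟩ := this
      have htT : t < T := by
        rcases lt_or_eq_of_le ht.2 with h | h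
        · exact h
        · rw [h] at hut; exact absurd hut hne'
      exact absurd hut.ge (not_le.2 (hbefore t ht.1 htT))
    -- u < a on [s₀, T], so u strictly decreasing there; contradiction
    have hlt : ∀ t ∈ Set.Icc s₀ T, u t < a := by
      intro t ht
      rcases lt_or_eq_of_le ht.2 with h | h
      · exact lt_trans (hbefore t ht.1 h) hca
      · rw [h, huT]; exact hca
    have hderiv := key T hs₀T.le hlt
    have hanti : StrictAntiOn u (Set.Icc s₀ T) := by
      apply strictAntiOn_of_deriv_neg (convex_Icc s₀ T) hu.continuous.continuousOn
      intro x hx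
      rw [interior_Icc] at hx
      exact hderiv x (Set.mem_Icc.2 ⟨hx.1.le, hx.2.le⟩)
    have := hanti (Set.left_mem_Icc.2 hs₀T.le) (Set.right_mem_Icc.2 hs₀T.le) hs₀T
    rw [huT] at this
    linarith
  -- deriv u < 0 on [s₀, ∞)
  have hderivneg : ∀ s, s₀ ≤ s → deriv u s < 0 := by
    intro s hs
    exact key s hs (fun t ht => stay t ht.1) s (Set.right_mem_Icc.2 hs)
  -- Gronwall: φ s = (a - u s) * exp(-s/a) is monotone on [s₀, ∞)
  set φ : ℝ → ℝ := fun s => (a - u s) * Real.exp (-s / a) with hφ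
  have hφd : ∀ s : ℝ, HasDerivAt φ
      ((-(deriv u s)) * Real.exp (-s / a) + (a - u s) * (Real.exp (-s / a) * (-1 / a))) s := by
    intro s
    have h1' : HasDerivAt (fun s : ℝ => a - u s) (-(deriv u s)) s := by
      have h0' : HasDerivAt (fun s : ℝ => a - u s) (0 - deriv u s) s := (hasDerivAt_const s a).sub (hu s).hasDerivAt
      rwa [zero_sub] at h0'
    have h2' : HasDerivAt (fun s : ℝ => Real.exp (-s / a)) (Real.exp (-s / a) * (-1 / a)) s := by
      have hlin : HasDerivAt (fun s : ℝ => -s / a) (-1 / a) s := by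
        simpa [neg_div] using ((hasDerivAt_id s).neg.div_const a)
      exact (Real.hasDerivAt_exp (-s / a)).comp s hlin
    exact h1'.mul h2'
  have hmono : MonotoneOn φ (Set.Ici s₀) := by
    apply monotoneOn_of_deriv_nonneg (convex_Ici s₀)
      (Continuous.continuousOn ((continuous_const.sub hu.continuous).mul
        (Real.continuous_exp.comp (continuous_id.neg.div_const a))))
      (fun x _ => ((hφd x).differentiableAt).differentiableWithinAt)
    intro x hx
    rw [interior_Ici] at hx
    have hx' : s₀ ≤ x := hx.le
    have hdx := hderivneg x hx'
    have hux := stay x hx'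
    have hsq := heq x hux
    have h0 := hpos x
    -- -deriv u x ≥ (a - u x)/a
    have hbound : (a - u x) / a ≤ -(deriv u x) := by
      have h1' : ((a - u x) / a) ^ 2 ≤ (-(deriv u x)) ^ 2 := by
        rw [neg_sq, hsq]
        have hnum : (a - u x) ^ 2 ≤ a ^ 2 - u x ^ 2 := by nlinarith
        calc ((a - u x) / a) ^ 2 = (a - u x) ^ 2 / a ^ 2 := by rw [div_pow]
          _ ≤ (a ^ 2 - u x ^ 2) / a ^ 2 := by gcongr
          _ = 1 - u x ^ 2 / a ^ 2 := by field_simp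
      nlinarith [hdx, h0, hle x, ha]
    show 0 ≤ deriv φ x
    rw [(hφd x).deriv]
    have hexp : 0 < Real.exp (-x / a) := Real.exp_pos _
    have : 0 ≤ (-(deriv u x) - (a - u x) / a) * Real.exp (-x / a) := by
      apply mul_nonneg _ hexp.le
      linarith
    calc (0:ℝ) ≤ (-(deriv u x) - (a - u x) / a) * Real.exp (-x / a) := this
      _ = -deriv u x * Real.exp (-x / a) + (a - u x) * (Real.exp (-x / a) * (-1 / a)) := by
          field_simp; ring
  -- derive contradiction
  set K := a - u s₀ with hK
  have hKpos : 0 < K := by rw [hK]; linarith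
  set s₁ := s₀ + a * Real.log (2 * a / K) with hs₁def
  have hs₁ge : s₀ ≤ s₁ := by
    rw [hs₁def]
    have : (1:ℝ) ≤ 2 * a / K := by
      rw [le_div_iff₀ hKpos]
      have := hpos s₀; rw [hK]; linarith
    have hlog : 0 ≤ Real.log (2 * a / K) := Real.log_nonneg this
    nlinarith
  have := hmono (Set.mem_Ici.2 le_rfl) (Set.mem_Ici.2 hs₁ge) hs₁ge
  rw [hφ] at this
  simp only at this
  -- φ s₀ ≤ φ s₁, i.e. K * exp(-s₀/a) ≤ (a - u s₁) * exp(-s₁/a) ≤ a * exp(-s₁/a)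
  have hstep : K * Real.exp (-s₀ / a) ≤ a * Real.exp (-s₁ / a) := by
    calc K * Real.exp (-s₀ / a) = (a - u s₀) * Real.exp (-s₀ / a) := by rw [hK]
      _ ≤ (a - u s₁) * Real.exp (-s₁ / a) := this
      _ ≤ a * Real.exp (-s₁ / a) := by
          apply mul_le_mul_of_nonneg_right _ (Real.exp_pos _).le
          linarith [hpos s₁]
  have hexpeq : Real.exp (-s₁ / a) = Real.exp (-s₀ / a) * (K / (2 * a)) := by
    rw [hs₁def]
    have hane : a ≠ 0 := ne_of_gt ha
    have harg : -(s₀ + a * Real.log (2 * a / K)) / a = -s₀ / a + (- Real.log (2 * a / K)) := by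
      field_simp; ring
    rw [harg, Real.exp_add, Real.exp_neg, Real.exp_log (by positivity : (0:ℝ) < 2 * a / K)]
    rw [inv_div]
  rw [hexpeq] at hstep
  have hexp0 : 0 < Real.exp (-s₀ / a) := Real.exp_pos _
  have : K ≤ a * (K / (2 * a)) := by
    have := hstep
    nlinarith
  have : a * (K / (2 * a)) = K / 2 := by field_simp
  linarith [this ▸ ‹K ≤ a * (K / (2 * a))›]

/-- Global ODE rigidity lemma from the proof of Theorem 2: a differentiable
function `u : ℝ → ℝ` with `0 < u ≤ a` everywhere, satisfying
`(u')² = 1 − u²/a²` wherever `u < a`, must be identically equal to `a`. -/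
theorem global_ode_rigidity
    (a : ℝ) (ha : 0 < a) (u : ℝ → ℝ) (hu : Differentiable ℝ u)
    (hpos : ∀ s : ℝ, 0 < u s) (hle : ∀ s : ℝ, u s ≤ a)
    (heq : ∀ s : ℝ, u s < a → (deriv u s) ^ 2 = 1 - (u s) ^ 2 / a ^ 2) :
    ∀ s : ℝ, u s = a := by
  intro s
  by_contra h
  have hlt : u s < a := lt_of_le_of_ne (hle s) h
  have hsq : (deriv u s) ^ 2 = 1 - (u s) ^ 2 / a ^ 2 := heq s hlt
  have hne : deriv u s ≠ 0 := by
    intro h0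
    rw [h0] at hsq
    have h0' := hpos s
    have : u s ^ 2 < a ^ 2 := by nlinarith
    have ha2 : (0:ℝ) < a ^ 2 := by positivity
    have ha' : a ≠ 0 := ne_of_gt ha
    field_simp at hsq
    nlinarith
  rcases lt_or_gt_of_ne hne with hneg | hpos'
  · exact global_ode_aux a ha u hu hpos hle heq s hlt hneg
  · -- reflect: v t = u (-t)
    set v : ℝ → ℝ := fun t => u (-t) with hv
    have hvd : Differentiable ℝ v := hu.comp differentiable_neg
    have hvderiv : ∀ t, deriv v t = -deriv u (-t) := fun t => deriv_comp_neg u t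
    apply global_ode_aux a ha v hvd (fun t => hpos (-t)) (fun t => hle (-t))
      (fun t ht => by rw [hvderiv]; simpa using heq (-t) ht) (-s)
    · show u (- -s) < a; rwa [neg_neg]
    · rw [hvderiv, neg_neg]; linarith
end
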